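/- arXiv:2402.16025 — 3 statements merged into one kernel-verified Lean document; each statement's English description precedes it below -/
import Mathlib

section
/- Theorem 1 (preservation of the second-order proximity, with explicit constants): Let d ≥ 1 and α > 0, suppose every component of the weight vector l satisfies l_i ≥ α, and suppose the direction vector r satisfies ‖r‖₂ = 1. If there is a vector x_w and a real ε₁ ≥ 0 such that p_score(u,w) ≤ ε₁ and p_score(v,w) ≤ ε₁, then the pairwise AS difference satisfies D(u,v) = p_score(u,v) + |h_score(u,v)| ≤ 4ε₁ + 2√(ε₁/α). -/
/-- Theorem 1 (preservation of the second-order proximity, with explicit constants). -/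
theorem second_order_proximity_preservation
    (d : ℕ) (hd : 1 ≤ d)
    (xu xv xw : EuclideanSpace ℝ (Fin d))
    (l r : EuclideanSpace ℝ (Fin d))
    (α : ℝ) (hα : 0 < α) (hl : ∀ i, α ≤ l i) (hr : ‖r‖ = 1)
    (ε₁ : ℝ) (hε₁ : 0 ≤ ε₁)
    (huw : ∑ i, l i * (xw i - xu i) ^ 2 ≤ ε₁)
    (hvw : ∑ i, l i * (xw i - xv i) ^ 2 ≤ ε₁) :
    (∑ i, l i * (xv i - xu i) ^ 2) + |∑ i, (xv i - xu i) * r i| ≤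
      4 * ε₁ + 2 * Real.sqrt (ε₁ / α) := by
  have h1 : ∑ i, l i * (xv i - xu i) ^ 2 ≤ 4 * ε₁ := by
    have hpt : ∀ i ∈ Finset.univ, l i * (xv i - xu i) ^ 2 ≤
        2 * (l i * (xw i - xu i) ^ 2) + 2 * (l i * (xw i - xv i) ^ 2) := by
      intro i _
      have h := (hα.le.trans (hl i))
      nlinarith [sq_nonneg (xw i - xu i + (xw i - xv i)), sq_nonneg (xw i - xu i - (xw i - xv i))]
    calc ∑ i, l i * (xv i - xu i) ^ 2
        ≤ ∑ i, (2 * (l i * (xw i - xu i) ^ 2) + 2 * (l i * (xw i - xv i) ^ 2)) :=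
          Finset.sum_le_sum hpt
      _ = 2 * (∑ i, l i * (xw i - xu i) ^ 2) + 2 * (∑ i, l i * (xw i - xv i) ^ 2) := by
          rw [Finset.sum_add_distrib, ← Finset.mul_sum, ← Finset.mul_sum]
      _ ≤ 4 * ε₁ := by linarith
  have hsum2 : ∑ i, (xv i - xu i) ^ 2 ≤ 4 * ε₁ / α := by
    rw [le_div_iff₀ hα, mul_comm]
    have : α * ∑ i, (xv i - xu i) ^ 2 = ∑ i, α * (xv i - xu i) ^ 2 := by
      rw [Finset.mul_sum]
    rw [this]
    refine le_trans (Finset.sum_le_sum fun i _ => ?_) h1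
    exact mul_le_mul_of_nonneg_right (hl i) (sq_nonneg _)
  have hnorm : ‖xv - xu‖ ≤ 2 * Real.sqrt (ε₁ / α) := by
    have hne : ‖xv - xu‖ = Real.sqrt (∑ i, (xv i - xu i) ^ 2) := by
      rw [EuclideanSpace.norm_eq]
      congr 1
      refine Finset.sum_congr rfl fun i _ => ?_
      simp [sq_abs]
    rw [hne]
    have : (4 : ℝ) * ε₁ / α = (2 : ℝ) ^ 2 * (ε₁ / α) := by ring
    calc Real.sqrt (∑ i, (xv i - xu i) ^ 2) ≤ Real.sqrt (4 * ε₁ / α) :=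
          Real.sqrt_le_sqrt hsum2
      _ = 2 * Real.sqrt (ε₁ / α) := by
          rw [this, Real.sqrt_mul (by positivity), Real.sqrt_sq (by norm_num)]
  have h2 : |∑ i, (xv i - xu i) * r i| ≤ 2 * Real.sqrt (ε₁ / α) := by
    have hinner : ∑ i, (xv i - xu i) * r i = (inner ℝ (xv - xu) r : ℝ) := by
      simp [PiLp.inner_apply, RCLike.inner_apply, mul_comm]
    rw [hinner]
    calc |(inner ℝ (xv - xu) r : ℝ)| ≤ ‖xv - xu‖ * ‖r‖ := abs_real_inner_le_norm _ _
      _ = ‖xv - xu‖ := by rw [hr, mul_one]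
      _ ≤ 2 * Real.sqrt (ε₁ / α) := hnorm
  linarith
end

section
/- Hierarchy part of the proof of Theorem 1: if every component of the weight vector l satisfies l_i ≥ α for some α > 0, the direction vector r satisfies ‖r‖₂ ≤ 1, and there is a vector x_w with p_score(u,w) ≤ ε₁ and p_score(v,w) ≤ ε₁ for some ε₁ ≥ 0, then |h_score(u,v)| ≤ 2√(ε₁/α). -/
open RealInnerProductSpace

/-- Hierarchy part of the proof of Theorem 1. -/
theorem h_score_le_two_sqrt
    (d : ℕ) (hd : 1 ≤ d)
    (xu xv xw : EuclideanSpace ℝ (Fin d)) (l r : EuclideanSpace ℝ (Fin d))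
    (α : ℝ) (hα : 0 < α) (hl : ∀ i, α ≤ l i) (hr : ‖r‖ ≤ 1)
    (ε₁ : ℝ) (hε₁ : 0 ≤ ε₁)
    (huw : ∑ i, l i * (xw i - xu i) ^ 2 ≤ ε₁)
    (hvw : ∑ i, l i * (xw i - xv i) ^ 2 ≤ ε₁) :
    |∑ i, (xv i - xu i) * r i| ≤ 2 * Real.sqrt (ε₁ / α) := by
  have key : ∀ a : EuclideanSpace ℝ (Fin d),
      (∑ i, l i * (xw i - a i) ^ 2 ≤ ε₁) → ‖a - xw‖ ≤ Real.sqrt (ε₁ / α) := by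
    intro a ha
    have hsum : ∑ i, (a i - xw i) ^ 2 ≤ ε₁ / α := by
      rw [le_div_iff₀ hα]
      calc (∑ i, (a i - xw i) ^ 2) * α = ∑ i, α * (xw i - a i) ^ 2 := by
            rw [Finset.sum_mul]; congr 1; ext i; ring
        _ ≤ ∑ i, l i * (xw i - a i) ^ 2 := by
            apply Finset.sum_le_sum; intro i _
            exact mul_le_mul_of_nonneg_right (hl i) (sq_nonneg _)
        _ ≤ ε₁ := ha
    have hnorm : ‖a - xw‖ = Real.sqrt (∑ i, (a i - xw i) ^ 2) := by
      rw [EuclideanSpace.norm_eq]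
      congr 1
      apply Finset.sum_congr rfl
      intro i _
      simp [sq_abs]
    rw [hnorm]
    exact Real.sqrt_le_sqrt hsum
  have h1 : ‖xv - xw‖ ≤ Real.sqrt (ε₁ / α) := key xv hvw
  have h2 : ‖xw - xu‖ ≤ Real.sqrt (ε₁ / α) := by
    have := key xu huw
    rwa [← norm_neg, neg_sub] at this
  have hinner : (∑ i, (xv i - xu i) * r i) = ⟪xv - xu, r⟫ := by
    rw [PiLp.inner_apply]
    apply Finset.sum_congr rfl
    intro i _
    simp
    ring
  rw [hinner]
  calc |⟪xv - xu, r⟫| ≤ ‖xv - xu‖ * ‖r‖ := abs_real_inner_le_norm _ _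
    _ ≤ ‖xv - xu‖ * 1 := mul_le_mul_of_nonneg_left hr (norm_nonneg _)
    _ = ‖xv - xu‖ := mul_one _
    _ ≤ ‖xv - xw‖ + ‖xw - xu‖ := norm_sub_le_norm_sub_add_norm_sub xv xw xu
    _ ≤ 2 * Real.sqrt (ε₁ / α) := by linarith
end

section
/- Eligible pairing sets are exactly warping paths: let m, n ≥ 1 and let P be a finite nonempty set of index pairs contained in {1,…,m} × {1,…,n} satisfying (i) coverage: every i ∈ {1,…,m} occurs as the first coordinate of some pair in P and every j ∈ {1,…,n} occurs as the second coordinate of some pair in P, and (ii) non-crossing monotonicity: for all (a,b), (a',b') ∈ P, if a < a' then b ≤ b', and if b < b' then a ≤ a'. Then (1,1) ∈ P and (m,n) ∈ P, and when the elements of P are listed in lexicographic order as (i₁,j₁),…,(i_K,j_K), every consecutive increment (i_{k+1} − i_k, j_{k+1} − j_k) lies in {(1,0),(0,1),(1,1)}; that is, the lexicographic enumeration of P is a warping path from (1,1) to (m,n). -/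
/-- A single admissible move in a warping path. -/
def DTWStep (q q' : ℕ × ℕ) : Prop :=
  (q'.1 = q.1 + 1 ∧ q'.2 = q.2) ∨ (q'.1 = q.1 ∧ q'.2 = q.2 + 1) ∨
    (q'.1 = q.1 + 1 ∧ q'.2 = q.2 + 1)

/-- A warping path from `(1,1)` to `(i,j)` inside the grid `{1,…,m} × {1,…,n}`. -/
def IsWarpingPathTo (m n i j : ℕ) (p : List (ℕ × ℕ)) : Prop :=
  (∀ q ∈ p, 1 ≤ q.1 ∧ q.1 ≤ m ∧ 1 ≤ q.2 ∧ q.2 ≤ n) ∧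
    p.head? = some (1, 1) ∧ p.getLast? = some (i, j) ∧ List.Chain' DTWStep p

private lemma lexNat {p q : ℕ × ℕ} :
    Prod.Lex (· < ·) (· < ·) p q ↔ p.1 < q.1 ∨ (p.1 = q.1 ∧ p.2 < q.2) :=
  Prod.lex_def

/-- Eligible pairing sets are exactly warping paths: the lexicographic enumeration
of an eligible pairing set is a warping path from `(1,1)` to `(m,n)`. -/
theorem eligible_pairing_is_warping_path
    (m n : ℕ) (hm : 1 ≤ m) (hn : 1 ≤ n)
    (P : Finset (ℕ × ℕ)) (hne : P.Nonempty)
    (hrange : ∀ q ∈ P, 1 ≤ q.1 ∧ q.1 ≤ m ∧ 1 ≤ q.2 ∧ q.2 ≤ n)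
    (hcov₁ : ∀ i, 1 ≤ i → i ≤ m → ∃ j, (i, j) ∈ P)
    (hcov₂ : ∀ j, 1 ≤ j → j ≤ n → ∃ i, (i, j) ∈ P)
    (hmono₁ : ∀ q ∈ P, ∀ q' ∈ P, q.1 < q'.1 → q.2 ≤ q'.2)
    (hmono₂ : ∀ q ∈ P, ∀ q' ∈ P, q.2 < q'.2 → q.1 ≤ q'.1)
    (L : List (ℕ × ℕ))
    (hLmem : ∀ q, q ∈ L ↔ q ∈ P)
    (hLsorted : L.Pairwise (Prod.Lex (· < ·) (· < ·))) :
    (1, 1) ∈ P ∧ (m, n) ∈ P ∧ IsWarpingPathTo m n m n L := by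
  set R : ℕ × ℕ → ℕ × ℕ → Prop := Prod.Lex (· < ·) (· < ·) with hR
  -- (1,1) ∈ P
  have h11 : (1, 1) ∈ P := by
    obtain ⟨j, hj⟩ := hcov₁ 1 le_rfl hm
    obtain ⟨i, hi⟩ := hcov₂ 1 le_rfl hn
    rcases Nat.lt_or_ge 1 j with hj1 | hj1
    · have h1 : i ≤ 1 := hmono₂ _ hi _ hj hj1
      have h2 : 1 ≤ i := (hrange _ hi).1
      have : i = 1 := le_antisymm h1 h2
      rwa [this] at hi
    · have : j = 1 := le_antisymm hj1 (hrange _ hj).2.2.1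
      rwa [this] at hj
  have hmn : (m, n) ∈ P := by
    obtain ⟨j, hj⟩ := hcov₁ m hm le_rfl
    obtain ⟨i, hi⟩ := hcov₂ n hn le_rfl
    rcases Nat.lt_or_ge j n with hj1 | hj1
    · have h1 : m ≤ i := hmono₂ _ hj _ hi hj1
      have h2 : i ≤ m := (hrange _ hi).2.1
      have : i = m := le_antisymm h2 h1
      rwa [this] at hi
    · have : j = n := le_antisymm (hrange _ hj).2.2.2 hj1
      rwa [this] at hj
  refine ⟨h11, hmn, ?_, ?_, ?_, ?_⟩
  · exact fun q hq => hrange q ((hLmem q).1 hq)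
  · -- head? = some (1,1)
    have h11L : (1, 1) ∈ L := (hLmem _).2 h11
    cases L with
    | nil => simp at h11L
    | cons a t =>
      rcases List.mem_cons.1 h11L with h | h
      · simp [← h]
      · exfalso
        have haR : R a (1, 1) := (List.pairwise_cons.1 hLsorted).1 _ h
        have ha : (1, 1) ∈ P := h11
        have haP : a ∈ P := (hLmem a).1 (List.mem_cons_self (a := a) (l := t))
        have h1 := (hrange a haP).1
        have h2 := (hrange a haP).2.2.1
        rw [hR, lexNat] at haR
        omega
  · -- getLast? = some (m,n)
    have hmnL : (m, n) ∈ L := (hLmem _).2 hmn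
    have hLne : L ≠ [] := List.ne_nil_of_mem hmnL
    rw [List.getLast?_eq_getLast hLne]
    congr 1
    by_contra hne'
    have hlastmem : L.getLast hLne ∈ L := List.getLast_mem hLne
    obtain ⟨k, hk⟩ := List.mem_iff_get.1 hmnL
    have hlast : L.getLast hLne = L.get ⟨L.length - 1, by
        have := List.length_pos_iff.2 hLne; omega⟩ := by
      simp [List.getLast_eq_getElem]
    have hklt : (k : ℕ) < L.length - 1 := by
      rcases Nat.lt_or_ge (k : ℕ) (L.length - 1) with h | h
      · exact h
      · exfalso
        have hk2 : (k : ℕ) = L.length - 1 := by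
          have := k.2; omega
        apply hne'
        rw [hlast, ← hk]
        congr 1
        exact Fin.ext hk2.symm
    have hRR : R (m, n) (L.getLast hLne) := by
      rw [hlast, ← hk]
      exact List.pairwise_iff_get.1 hLsorted k ⟨L.length - 1, by
        have := List.length_pos_iff.2 hLne; omega⟩ hklt
    have hlp : L.getLast hLne ∈ P := (hLmem _).1 hlastmem
    have h1 := (hrange _ hlp).2.1
    have h2 := (hrange _ hlp).2.2.2
    rw [hR, lexNat] at hRR
    omega
  · -- Chain'
    -- key step lemma
    have key : ∀ q ∈ P, ∀ q' ∈ P, R q q' →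
        (∀ p ∈ P, R q p → R p q' → False) → DTWStep q q' := by
      intro q hq q' hq' hlt hmid
      obtain ⟨a, b⟩ := q
      obtain ⟨a', b'⟩ := q'
      rw [hR, lexNat] at hlt
      simp only at hlt
      rcases hlt with hlt | ⟨hEq, hlt⟩
      · -- a < a'
        have ha'm := (hrange _ hq').2.1
        have hb'n := (hrange _ hq').2.2.2
        have ha1 : a' = a + 1 := by
          by_contra hcon
          have : a + 1 < a' := by omega
          obtain ⟨j, hjP⟩ := hcov₁ (a + 1) (by omega) (by omega)
          exact hmid _ hjP (lexNat.2 (Or.inl (by simp <;> omega)))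
            (lexNat.2 (Or.inl (by simp <;> omega)))
        have hbb' : b ≤ b' := hmono₁ _ hq _ hq' hlt
        have hb1 : b' ≤ b + 1 := by
          by_contra hcon
          obtain ⟨i, hiP⟩ := hcov₂ (b + 1) (by omega) (by omega)
          have hai : a ≤ i := hmono₂ _ hq _ hiP (by simp <;> omega)
          have hia : i ≤ a' := hmono₂ _ hiP _ hq' (by simp <;> omega)
          apply hmid _ hiP
          · exact lexNat.2 (by simp <;> omega)
          · exact lexNat.2 (by simp <;> omega)
        unfold DTWStep
        simp only
        omega
      · -- a = a', b < b'
        have hb'n := (hrange _ hq').2.2.2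
        have hb1 : b' = b + 1 := by
          by_contra hcon
          obtain ⟨i, hiP⟩ := hcov₂ (b + 1) (by omega) (by omega)
          have hai : a ≤ i := hmono₂ _ hq _ hiP (by simp <;> omega)
          have hia : i ≤ a' := hmono₂ _ hiP _ hq' (by simp <;> omega)
          apply hmid _ hiP
          · exact lexNat.2 (by simp <;> omega)
          · exact lexNat.2 (by simp <;> omega)
        unfold DTWStep
        simp only
        omega
    show List.IsChain DTWStep L
    rw [List.isChain_iff_getElem]
    intro k hk
    have hk1 : k < L.length := by omega
    have hk2 : k + 1 < L.length := by omega
    set q := L.get ⟨k, hk1⟩ with hq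
    set q' := L.get ⟨k + 1, hk2⟩ with hq'
    have hqP : q ∈ P := (hLmem _).1 (by rw [hq]; exact List.get_mem L ⟨k, hk1⟩)
    have hq'P : q' ∈ P := (hLmem _).1 (by rw [hq']; exact List.get_mem L ⟨k+1, hk2⟩)
    have hRqq' : R q q' := List.pairwise_iff_get.1 hLsorted ⟨k, hk1⟩ ⟨k + 1, hk2⟩
      (by simp)
    refine key q hqP q' hq'P hRqq' ?_
    intro p hpP h1 h2
    obtain ⟨l, hl⟩ := List.mem_iff_get.1 ((hLmem p).2 hpP)
    rw [hR, lexNat] at h1 h2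
    rcases Nat.lt_trichotomy (l : ℕ) k with hc | hc | hc
    · have : R p q := by
        rw [← hl]; exact List.pairwise_iff_get.1 hLsorted l ⟨k, hk1⟩ hc
      rw [hR, lexNat] at this
      omega
    · have : p = q := by rw [← hl, hq]; congr 1; exact Fin.ext hc
      rw [this] at h1; omega
    · rcases Nat.lt_trichotomy (l : ℕ) (k + 1) with hd | hd | hd
      · omega
      · have : p = q' := by rw [← hl, hq']; congr 1; exact Fin.ext hd
        rw [this] at h2; omega
      · have : R q' p := by
          rw [← hl]; exact List.pairwise_iff_get.1 hLsorted ⟨k + 1, hk2⟩ l hd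
        rw [hR, lexNat] at this
        omega
end
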